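/- Let the initial weights W_l(0) follow scaled-orthogonal initialization as in the context, and let 1 ≤ k < L. Suppose {u_i}_{i=1}^m and {v_i}_{i=1}^m are orthonormal families in ℝ^d such that for every i ∈ {1,…,m}: W_k(0)·v_i = ε_k·u_i, W_k(0)ᵀ·u_i = ε_k·v_i, Φᵀ·(W_L(0)⋯W_{k+1}(0))·u_i = 0, and Φ·(W_{k−1}(0)⋯W_1(0))ᵀ·v_i = 0 (empty products equal I_d). Define v'_i := u_i and u'_i := W_{k+1}(0)·v'_i / ε_{k+1}. Then {u'_i}_{i=1}^m is orthonormal and for every i ∈ {1,…,m}: W_{k+1}(0)·v'_i = ε_{k+1}·u'_i, W_{k+1}(0)ᵀ·u'_i = ε_{k+1}·v'_i, Φᵀ·(W_L(0)⋯W_{k+2}(0))·u'_i = 0, and Φ·(W_k(0)⋯W_1(0))ᵀ·v'_i = 0. -/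

import Mathlib

open Matrix BigOperators Filter

noncomputable section

/-- Auxiliary: product of `k` consecutive matrices ending (on the right) at index `i`. -/
def chainAux {n : Type*} [Fintype n] [DecidableEq n]
    (W : ℕ → Matrix n n ℝ) (i : ℕ) : ℕ → Matrix n n ℝ
  | 0 => 1
  | (k+1) => W (i + k) * chainAux W i k

/-- `chain W i j = W j * W (j-1) * ⋯ * W i`; equals `1` when `j < i` (empty product). -/
def chain {n : Type*} [Fintype n] [DecidableEq n]
    (W : ℕ → Matrix n n ℝ) (i j : ℕ) : Matrix n n ℝ :=
  chainAux W i (j + 1 - i)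

/-- `blockDiag r m A B` is the `(2r+m)×(2r+m)` block-diagonal matrix `diag(A, B)`
with top-left block `A` (of size `2r×2r`) and bottom-right block `B` (of size `m×m`). -/
def blockDiag (r m : ℕ) (A : Matrix (Fin (2*r)) (Fin (2*r)) ℝ)
    (B : Matrix (Fin m) (Fin m) ℝ) : Matrix (Fin (2*r + m)) (Fin (2*r + m)) ℝ :=
  Matrix.reindex finSumFinEquiv finSumFinEquiv (Matrix.fromBlocks A 0 0 B)

/-- The `d×2r` matrix formed by the first `2r` columns of a `(2r+m)×(2r+m)` matrix. -/
def cols1 (r m : ℕ) (U : Matrix (Fin (2*r + m)) (Fin (2*r + m)) ℝ) :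
    Matrix (Fin (2*r + m)) (Fin (2*r)) ℝ :=
  fun i j => U i (Fin.castAdd m j)

/-- The `d×m` matrix formed by the last `m` columns of a `(2r+m)×(2r+m)` matrix. -/
def cols2 (r m : ℕ) (U : Matrix (Fin (2*r + m)) (Fin (2*r + m)) ℝ) :
    Matrix (Fin (2*r + m)) (Fin m) ℝ :=
  fun i j => U i (Fin.natAdd (2*r) j)

/-- Squared Frobenius norm: `‖A‖_F² = trace(AᵀA)`. -/
def frobSq {p q : Type*} [Fintype p] [Fintype q] (A : Matrix p q ℝ) : ℝ :=
  Matrix.trace (Aᵀ * A)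

/-- Frobenius norm: `‖A‖_F = √(trace(AᵀA))`. -/
def frobNorm {p q : Type*} [Fintype p] [Fintype q] (A : Matrix p q ℝ) : ℝ :=
  Real.sqrt (Matrix.trace (Aᵀ * A))

lemma chainAux_succ {n : Type*} [Fintype n] [DecidableEq n]
    (W : ℕ → Matrix n n ℝ) (i : ℕ) : ∀ k, chainAux W i (k+1) = chainAux W (i+1) k * W i := by
  intro k
  induction k with
  | zero => simp [chainAux]
  | succ k ih =>
      have h1 : chainAux W i (k+1+1) = W (i+(k+1)) * chainAux W i (k+1) := rfl
      have h2 : chainAux W (i+1) (k+1) = W (i+1+k) * chainAux W (i+1) k := rfl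
      rw [h1, ih, h2, ← mul_assoc, show i + (k+1) = i+1+k by omega]

lemma chain_peel_right {n : Type*} [Fintype n] [DecidableEq n]
    (W : ℕ → Matrix n n ℝ) (i j : ℕ) (h : i ≤ j) :
    chain W i j = chain W (i+1) j * W i := by
  unfold chain
  have h1 : j + 1 - i = (j + 1 - (i+1)) + 1 := by omega
  rw [h1, chainAux_succ]

/-- inductive step of Lemma 1 over layers, at initialization:
given orthonormal families at layer `k`, the vectors `v'_i := u_i` and
`u'_i := W_{k+1}(0)·u_i / ε_{k+1}` satisfy the corresponding properties at layer
`k+1`. Here `W l` denotes `W_l(0)` and `d = 2r + m`. -/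
theorem statement6
    (r m : ℕ) (hm : 0 < m) (L : ℕ) (hL : 1 ≤ L)
    (Φ : Matrix (Fin (2*r + m)) (Fin (2*r + m)) ℝ) (hΦ : Φ.rank ≤ r)
    (ε : ℕ → ℝ) (hε : ∀ l, 1 ≤ l → l ≤ L → 0 < ε l)
    (W : ℕ → Matrix (Fin (2*r + m)) (Fin (2*r + m)) ℝ)
    (hW0 : ∀ l, 1 ≤ l → l ≤ L →
      W l * (W l)ᵀ = (ε l)^2 • (1 : Matrix (Fin (2*r + m)) (Fin (2*r + m)) ℝ) ∧
      (W l)ᵀ * W l = (ε l)^2 • (1 : Matrix (Fin (2*r + m)) (Fin (2*r + m)) ℝ))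
    (k : ℕ) (hk1 : 1 ≤ k) (hkL : k < L)
    (u v : Fin m → (Fin (2*r + m) → ℝ))
    (hu : ∀ i j, u i ⬝ᵥ u j = if i = j then (1:ℝ) else 0)
    (hv : ∀ i j, v i ⬝ᵥ v j = if i = j then (1:ℝ) else 0)
    (hA : ∀ i, (W k) *ᵥ (v i) = ε k • u i)
    (hB : ∀ i, (W k)ᵀ *ᵥ (u i) = ε k • v i)
    (hC : ∀ i, Φᵀ *ᵥ ((chain W (k+1) L) *ᵥ (u i)) = 0)
    (hD : ∀ i, Φ *ᵥ ((chain W 1 (k-1))ᵀ *ᵥ (v i)) = 0)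
    (u' v' : Fin m → (Fin (2*r + m) → ℝ))
    (hv' : ∀ i, v' i = u i)
    (hu' : ∀ i, u' i = (ε (k+1))⁻¹ • ((W (k+1)) *ᵥ (v' i))) :
    (∀ i j, u' i ⬝ᵥ u' j = if i = j then (1:ℝ) else 0) ∧
    (∀ i,
      (W (k+1)) *ᵥ (v' i) = ε (k+1) • u' i ∧
      (W (k+1))ᵀ *ᵥ (u' i) = ε (k+1) • v' i ∧
      Φᵀ *ᵥ ((chain W (k+2) L) *ᵥ (u' i)) = 0 ∧
      Φ *ᵥ ((chain W 1 k)ᵀ *ᵥ (v' i)) = 0) := by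
  have hεk1 : 0 < ε (k+1) := hε (k+1) (by omega) (by omega)
  have hεk1ne : ε (k+1) ≠ 0 := ne_of_gt hεk1
  obtain ⟨hWWt, hWtW⟩ := hW0 (k+1) (by omega) (by omega)
  -- key inner-product identity
  have key : ∀ x y : Fin (2*r+m) → ℝ,
      (W (k+1) *ᵥ x) ⬝ᵥ (W (k+1) *ᵥ y) = (ε (k+1))^2 * (x ⬝ᵥ y) := by
    intro x y
    have h1 : (W (k+1) *ᵥ x) ⬝ᵥ (W (k+1) *ᵥ y)
        = x ⬝ᵥ (((W (k+1))ᵀ * W (k+1)) *ᵥ y) := by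
      rw [← Matrix.mulVec_mulVec, Matrix.dotProduct_mulVec,
        ← Matrix.vecMul_transpose, Matrix.dotProduct_mulVec,
        Matrix.dotProduct_mulVec, Matrix.vecMul_vecMul]
    rw [h1, hWtW, Matrix.smul_mulVec, Matrix.one_mulVec,
      dotProduct_smul, smul_eq_mul]
  constructor
  · intro i j
    rw [hu' i, hu' j, hv' i, hv' j]
    rw [smul_dotProduct, dotProduct_smul, key, hu i j,
      smul_eq_mul, smul_eq_mul]
    split_ifs <;> field_simp <;> ring
  · intro i
    have hWv' : W (k+1) *ᵥ v' i = ε (k+1) • u' i := by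
      rw [hu' i, smul_smul, mul_inv_cancel₀ hεk1ne, one_smul]
    refine ⟨hWv', ?_, ?_, ?_⟩
    · rw [hu' i, Matrix.mulVec_smul, Matrix.mulVec_mulVec, hWtW,
        Matrix.smul_mulVec, Matrix.one_mulVec, smul_smul]
      congr 1
      field_simp
    · have hchain : chain W (k+1) L = chain W (k+2) L * W (k+1) :=
        chain_peel_right W (k+1) L (by omega)
      rw [hu' i, hv' i, Matrix.mulVec_smul, Matrix.mulVec_mulVec,
        ← hchain, Matrix.mulVec_smul, hC i, smul_zero]
    · have hchain : chain W 1 k = W k * chain W 1 (k-1) := by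
        unfold chain
        have h1 : k + 1 - 1 = (k-1) + 1 := by omega
        have h2 : k - 1 + 1 - 1 = k - 1 := by omega
        rw [h1, h2]
        have h3 : chainAux W 1 ((k-1)+1) = W (1+(k-1)) * chainAux W 1 (k-1) := rfl
        rw [h3, show 1 + (k-1) = k by omega]
      rw [hv' i, hchain, Matrix.transpose_mul, ← Matrix.mulVec_mulVec,
        hB i, Matrix.mulVec_smul, Matrix.mulVec_smul, hD i, smul_zero]
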